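/- Let n : ℕ and let M be a 2^n × 2^n complex matrix all of whose entries are real and which is symmetric (Mᵀ = M). Then for every Pauli string a : Fin n → Fin 4, the Pauli projection coefficient c_a = 2^{-n} · Tr(M * g_a) is a real number (its imaginary part vanishes). -/
import Mathlib


open Matrix

/-- The four Pauli matrices σ_I, σ_X, σ_Y, σ_Z. -/
noncomputable def pauli : Fin 4 → Matrix (Fin 2) (Fin 2) ℂ
  | 0 => 1
  | 1 => !![0, 1; 1, 0]
  | 2 => !![0, -Complex.I; Complex.I, 0]
  | 3 => !![1, 0; 0, -1]

/-- The `n`-qubit Pauli tensor `g_a = σ_{a 0} ⊗ ⋯ ⊗ σ_{a (n-1)}`, realized as a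
matrix indexed by `Fin n → Fin 2` (a type of cardinality `2 ^ n`), whose entries
are given by the usual Kronecker-product formula. -/
noncomputable def pauliTensor {n : ℕ} (a : Fin n → Fin 4) :
    Matrix (Fin n → Fin 2) (Fin n → Fin 2) ℂ :=
  Matrix.of fun i j => ∏ k, pauli (a k) (i k) (j k)

/-- The number of `Y` labels in the Pauli string `a`. -/
def numY {n : ℕ} (a : Fin n → Fin 4) : ℕ :=
  (Finset.univ.filter fun k => a k = 2).card

/-- For a real symmetric matrix `M`, every Pauli projection coefficient
`c_a = 2^{-n} · Tr(M * g_a)` is a real number. -/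
theorem pauli_coeff_real (n : ℕ)
    (M : Matrix (Fin n → Fin 2) (Fin n → Fin 2) ℂ)
    (hreal : ∀ i j, (M i j).im = 0) (hsym : Mᵀ = M)
    (a : Fin n → Fin 4) :
    (((2 : ℂ) ^ n)⁻¹ * (M * pauliTensor a).trace).im = 0 := by
  have hpauli : ∀ (s : Fin 4) (i j : Fin 2), star (pauli s i j) = pauli s j i := by
    intro s i j
    fin_cases s <;> fin_cases i <;> fin_cases j <;>
      simp [pauli, Matrix.one_apply]
  have hg : (pauliTensor a)ᴴ = pauliTensor a := by
    ext i j
    simp only [Matrix.conjTranspose_apply, pauliTensor, Matrix.of_apply, star_prod]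
    exact Finset.prod_congr rfl fun k _ => hpauli (a k) (j k) (i k)
  have hM : Mᴴ = M := by
    ext i j
    rw [Matrix.conjTranspose_apply, show M j i = M i j from by conv_lhs => rw [← hsym]; rw [Matrix.transpose_apply]]
    exact Complex.conj_eq_iff_im.2 (hreal i j)
  have htr : (starRingEnd ℂ) ((M * pauliTensor a).trace) = (M * pauliTensor a).trace := by
    have := Matrix.trace_conjTranspose (M * pauliTensor a)
    rw [Matrix.conjTranspose_mul, hg, hM] at this
    rw [← Matrix.trace_mul_comm] at this
    exact this.symm
  have him : ((M * pauliTensor a).trace).im = 0 := Complex.conj_eq_iff_im.1 htr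
  have hinv : (((2 : ℂ) ^ n)⁻¹).im = 0 := by
    have : ((2 : ℂ) ^ n)⁻¹ = ((((2 : ℝ) ^ n)⁻¹ : ℝ) : ℂ) := by push_cast; ring
    rw [this, Complex.ofReal_im]
  rw [Complex.mul_im, him, hinv]
  ring
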